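/- Let $k\ge 4$ and $s\ge 3$. Every $s$-bunch of $k$-cliques has maximum density at least that of the simple $s$-$2$-cluster: $m(B_s) \ge d(C_s) = \frac{k+1}{2}-\frac{k}{sk-2s+2}$. -/

import Mathlib

open scoped Classical

/-- The union graph of a family of cliques: two vertices are adjacent iff they are
distinct and lie together in some member of the family. -/
def cliquesGraph {α : Type*} {s : ℕ} (F : Fin s → Finset α) : SimpleGraph α where
  Adj u v := u ≠ v ∧ ∃ i, u ∈ F i ∧ v ∈ F i
  symm := by
    constructor
    rintro u v ⟨h, i, h1, h2⟩
    exact ⟨h.symm, i, h2, h1⟩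
  loopless := by
    constructor
    rintro u ⟨h, -⟩
    exact h rfl

/-- `F` is an `s`-bunch of `k`-cliques: each `F i` has `k` vertices, and for `i ≥ 1`
the clique `F i` contains a vertex outside the union of the previous cliques and
meets that union in at least two vertices. -/
def IsBunch {α : Type*} [DecidableEq α] (k : ℕ) {s : ℕ} (F : Fin s → Finset α) : Prop :=
  (∀ i, (F i).card = k) ∧
  ∀ i : Fin s, 0 < (i : ℕ) →
    ¬ F i ⊆ (Finset.Iio i).biUnion F ∧ 2 ≤ (F i ∩ (Finset.Iio i).biUnion F).card


variable {α : Type} [DecidableEq α]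

/-- edge set of clique on t -/
def clq (t : Finset α) : Finset (Sym2 α) := t.offDiag.image Sym2.mk.uncurry

lemma mem_clq {t : Finset α} {u v : α} : s(u,v) ∈ clq t ↔ u ∈ t ∧ v ∈ t ∧ u ≠ v := by
  simp only [clq, Finset.mem_image, Finset.mem_offDiag, Function.uncurry_apply_pair, Sym2.eq_iff, Prod.exists]
  constructor
  · rintro ⟨a, b, ⟨ha, hb, hab⟩, (⟨rfl, rfl⟩|⟨rfl, rfl⟩)⟩
    · exact ⟨ha, hb, hab⟩
    · exact ⟨hb, ha, fun h => hab h.symm⟩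
  · rintro ⟨hu, hv, huv⟩
    exact ⟨u, v, ⟨hu, hv, huv⟩, Or.inl ⟨rfl, rfl⟩⟩

lemma clq_mono {t u : Finset α} (h : t ⊆ u) : clq t ⊆ clq u :=
  Finset.image_subset_image (Finset.offDiag_mono h)

lemma two_mul_card_clq (t : Finset α) : 2 * (clq t).card = t.card * (t.card - 1) := by
  rw [clq, Sym2.two_mul_card_image_offDiag, Finset.offDiag_card,
    Nat.mul_sub, mul_one]

def Uset {s : ℕ} (F : Fin s → Finset α) (m : ℕ) : Finset α :=
  (Finset.univ.filter (fun j : Fin s => (j:ℕ) < m)).biUnion F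

def Eset {s : ℕ} (F : Fin s → Finset α) (m : ℕ) : Finset (Sym2 α) :=
  (Finset.univ.filter (fun j : Fin s => (j:ℕ) < m)).biUnion (fun j => clq (F j))

lemma filter_lt_succ {s : ℕ} (m : ℕ) (hm : m < s) :
    Finset.univ.filter (fun j : Fin s => (j:ℕ) < m+1)
      = insert ⟨m,hm⟩ (Finset.univ.filter (fun j : Fin s => (j:ℕ) < m)) := by
  ext j
  simp only [Finset.mem_filter, Finset.mem_univ, true_and, Finset.mem_insert, Fin.ext_iff]
  omega

lemma Uset_succ {s : ℕ} (F : Fin s → Finset α) (m : ℕ) (hm : m < s) :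
    Uset F (m+1) = F ⟨m,hm⟩ ∪ Uset F m := by
  rw [Uset, filter_lt_succ m hm, Finset.biUnion_insert]; rfl

lemma Eset_succ {s : ℕ} (F : Fin s → Finset α) (m : ℕ) (hm : m < s) :
    Eset F (m+1) = clq (F ⟨m,hm⟩) ∪ Eset F m := by
  rw [Eset, filter_lt_succ m hm, Finset.biUnion_insert]; rfl

lemma Iio_biUnion_eq {s : ℕ} (F : Fin s → Finset α) (m : ℕ) (hm : m < s) :
    (Finset.Iio (⟨m,hm⟩ : Fin s)).biUnion F = Uset F m := by
  congr 1
  ext j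
  simp [Fin.lt_def]

lemma subset_Uset {s : ℕ} (F : Fin s → Finset α) {m : ℕ} (j : Fin s) (hj : (j:ℕ) < m) :
    F j ⊆ Uset F m := by
  intro x hx
  exact Finset.mem_biUnion.2 ⟨j, by simp [hj], hx⟩

lemma quad (k a : ℕ) (h2 : 2 ≤ a) (hak : a < k) :
    k*(k-a) + (k-2) + a*(a-1) ≤ k*(k-1) := by
  obtain ⟨b, rfl⟩ : ∃ b, a = b + 2 := ⟨a-2, by omega⟩
  obtain ⟨n, rfl⟩ : ∃ n, k = b + 2 + n + 1 := ⟨k - (b+2) - 1, by omega⟩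
  have e1 : b + 2 + n + 1 - (b + 2) = n + 1 := by omega
  have e2 : b + 2 + n + 1 - 2 = b + n + 1 := by omega
  have e3 : b + 2 - 1 = b + 1 := by omega
  have e4 : b + 2 + n + 1 - 1 = b + n + 2 := by omega
  rw [e1, e2, e3, e4]
  nlinarith

lemma key {s k : ℕ} (hk : 4 ≤ k) (F : Fin s → Finset α) (hF : IsBunch k F) :
    ∀ m, 1 ≤ m → m ≤ s →
      k ≤ (Uset F m).card ∧
      (Uset F m).card ≤ k + (m-1)*(k-2) ∧
      k * (Uset F m).card + (m-1)*(k-2) ≤ 2 * (Eset F m).card + k := by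
  intro m hm
  induction m, hm using Nat.le_induction with
  | base =>
    intro hs1
    have h0 : (0:ℕ) < s := hs1
    have hU : Uset F 1 = F ⟨0, h0⟩ := by
      rw [show (1:ℕ) = 0 + 1 from rfl, Uset_succ F 0 h0]
      simp [Uset]
    have hE : Eset F 1 = clq (F ⟨0, h0⟩) := by
      rw [show (1:ℕ) = 0 + 1 from rfl, Eset_succ F 0 h0]
      simp [Eset]
    have hc := hF.1 ⟨0, h0⟩
    have h2c := two_mul_card_clq (F ⟨0, h0⟩)
    rw [hc] at h2c
    rw [hU, hE, hc]
    refine ⟨le_refl _, by simp, ?_⟩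
    have : k*(k-1) + k = k*k := by
      rw [Nat.mul_sub, mul_one]
      have : k ≤ k*k := Nat.le_mul_of_pos_left k (by omega)
      omega
    simp only [Nat.sub_self, zero_mul, add_zero, h2c]
    omega
  | succ m hm ih =>
    intro hms
    have hmlt : m < s := by omega
    obtain ⟨hk1, hk2, hk3⟩ := ih (by omega)
    set i : Fin s := ⟨m, hmlt⟩ with hi
    obtain ⟨hB1, hB2⟩ := hF.2 i (by simp only [hi]; omega)
    rw [Iio_biUnion_eq F m hmlt] at hB1 hB2
    set t : Finset α := F i ∩ Uset F m with ht
    set a : ℕ := t.card with ha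
    -- a < k
    have hsub : t ⊆ F i := Finset.inter_subset_left
    have hak : a < k := by
      rw [← hF.1 i]
      refine Finset.card_lt_card (hsub.ssubset_of_ne ?_)
      intro h
      exact hB1 (Finset.inter_eq_left.1 h)
    -- vertex count
    have h1 : (Uset F (m+1)).card + a = k + (Uset F m).card := by
      rw [Uset_succ F m hmlt, ← hF.1 i]
      exact Finset.card_union_add_card_inter _ _
    -- edge count
    set D : Finset (Sym2 α) := clq (F i) \ clq t with hD
    have hDsub : clq t ⊆ clq (F i) := clq_mono hsub
    have h2 : D.card + (clq t).card = (clq (F i)).card :=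
      Finset.card_sdiff_add_card_eq_card hDsub
    have hdisj : Disjoint D (Eset F m) := by
      refine Finset.disjoint_left.2 ?_
      intro e heD heE
      induction e using Sym2.ind with
      | _ u v =>
        rw [hD, Finset.mem_sdiff] at heD
        obtain ⟨heF, hent⟩ := heD
        rw [mem_clq] at heF
        obtain ⟨j, hj, hej⟩ := Finset.mem_biUnion.1 heE
        rw [Finset.mem_filter] at hj
        rw [mem_clq] at hej
        apply hent
        rw [mem_clq, ht]
        exact ⟨Finset.mem_inter.2 ⟨heF.1, subset_Uset F j hj.2 hej.1⟩,
               Finset.mem_inter.2 ⟨heF.2.1, subset_Uset F j hj.2 hej.2.1⟩, heF.2.2⟩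
    have h3 : D.card + (Eset F m).card ≤ (Eset F (m+1)).card := by
      rw [← Finset.card_union_of_disjoint hdisj]
      apply Finset.card_le_card
      rw [Eset_succ F m hmlt]
      exact Finset.union_subset_union Finset.sdiff_subset (le_refl _)
    -- arithmetic
    have e1 : 2 * (clq t).card = a*(a-1) := two_mul_card_clq t
    have e2 : 2 * (clq (F i)).card = k*(k-1) := by
      rw [two_mul_card_clq, hF.1 i]
    have f1 : k * (Uset F (m+1)).card + k*a = k*k + k*(Uset F m).card := by
      rw [← Nat.mul_add, ← Nat.mul_add, h1]
    have f5 := quad k a hB2 hak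
    have f6 : (m+1-1)*(k-2) = (m-1)*(k-2) + (k-2) := by
      obtain ⟨m', rfl⟩ : ∃ m', m = m'+1 := ⟨m-1, by omega⟩
      simp [Nat.add_sub_cancel]
      ring
    have f7 : k*(k-a) + k*a = k*k := by
      rw [← Nat.mul_add]
      congr 1
      omega
    refine ⟨?_, ?_, ?_⟩
    · omega
    · -- card bound
      have f8 : (m+1-1)*(k-2) = (m-1)*(k-2) + (k-2) := f6
      omega
    · -- edge bound
      have f2 : 2*D.card + a*(a-1) = k*(k-1) := by omega
      generalize hA1 : k * (Uset F (m+1)).card = A1 at f1 ⊢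
      generalize hA4 : k * (Uset F m).card = A4 at f1 hk3
      generalize hA2 : k*a = A2 at f1 f7
      generalize hA3 : k*k = A3 at f1 f7
      generalize hA5 : a*(a-1) = A5 at f2 f5
      generalize hA6 : k*(k-1) = A6 at f2 f5
      generalize hA7 : k*(k-a) = A7 at f5 f7
      generalize hP : (m-1)*(k-2) = P at f6 hk3
      generalize hQ : (m+1-1)*(k-2) = Q at f6 ⊢
      omega


/-- Every `s`-bunch of `k`-cliques (`k ≥ 4`, `s ≥ 3`) has maximum density at least
`(k+1)/2 - k/(sk-2s+2)`, the density of the simple `s`-`2`-cluster. -/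
theorem stmt2 (k s : ℕ) (hk : 4 ≤ k) (hs : 3 ≤ s)
    {α : Type} [DecidableEq α] [Fintype α] (F : Fin s → Finset α) (hF : IsBunch k F) :
    ∃ H : (cliquesGraph F).Subgraph, H.verts.Nonempty ∧
      ((k : ℚ) + 1) / 2 - (k : ℚ) / ((s : ℚ) * k - 2 * s + 2) ≤
        (H.edgeSet.ncard : ℚ) / (H.verts.ncard : ℚ) := by
  obtain ⟨hU1, hU2, hU3⟩ := key hk F hF s (by omega) le_rfl
  have hFsub : ∀ i : Fin s, F i ⊆ Uset F s := fun i => subset_Uset F i i.isLt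
  let H : (cliquesGraph F).Subgraph :=
    { verts := ↑(Uset F s)
      Adj := (cliquesGraph F).Adj
      adj_sub := fun h => h
      edge_vert := by rintro u v ⟨hne, i, h1, h2⟩; exact Finset.mem_coe.2 (hFsub i h1)
      symm := (cliquesGraph F).symm }
  have hverts : H.verts = ↑(Uset F s) := rfl
  have hedge : H.edgeSet = ↑(Eset F s) := by
    ext e
    induction e using Sym2.ind with
    | _ u v =>
      rw [SimpleGraph.Subgraph.mem_edgeSet]
      simp only [Finset.mem_coe, Eset, Finset.mem_biUnion,
        Finset.mem_filter, Finset.mem_univ, true_and, mem_clq]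
      constructor
      · rintro ⟨hne, i, h1, h2⟩
        exact ⟨i, i.isLt, h1, h2, hne⟩
      · rintro ⟨i, _, h1, h2, hne⟩
        exact ⟨hne, i, h1, h2⟩
  refine ⟨H, ?_, ?_⟩
  · obtain ⟨x, hx⟩ := Finset.card_pos.1 (show 0 < (Uset F s).card by omega)
    exact ⟨x, Finset.mem_coe.2 hx⟩
  · rw [hedge, hverts, Set.ncard_coe_finset, Set.ncard_coe_finset]
    -- rational arithmetic
    set K : ℚ := (k : ℚ) with hK
    set S : ℚ := (s : ℚ) with hS
    have hKq : (4:ℚ) ≤ K := by rw [hK]; exact_mod_cast hk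
    have hSq : (3:ℚ) ≤ S := by rw [hS]; exact_mod_cast hs
    have hcast : (((s-1)*(k-2) : ℕ) : ℚ) = (S-1)*(K-2) := by
      push_cast [Nat.cast_sub (by omega : 1 ≤ s), Nat.cast_sub (by omega : 2 ≤ k)]
      ring
    set vq : ℚ := ((Uset F s).card : ℚ) with hv
    set eq : ℚ := ((Eset F s).card : ℚ) with he
    have c1 : K ≤ vq := by rw [hK, hv]; exact_mod_cast hU1
    have c2 : vq ≤ K + (S-1)*(K-2) := by
      rw [← hcast, hK, hv]
      exact_mod_cast hU2
    have c3 : K*vq + (S-1)*(K-2) ≤ 2*eq + K := by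
      rw [← hcast, hK, hv, he]
      exact_mod_cast hU3
    set D : ℚ := S*K - 2*S + 2 with hD
    have hDK : 2*K ≤ D := by
      nlinarith [mul_nonneg (by linarith : (0:ℚ) ≤ S-3) (by linarith : (0:ℚ) ≤ K-2)]
    have hDpos : 0 < D := by linarith
    have hvpos : 0 < vq := by linarith
    rw [div_sub_div _ _ two_ne_zero (ne_of_gt hDpos),
      div_le_div_iff₀ (by positivity) hvpos]
    have hvD : vq ≤ D := by nlinarith [c2]
    nlinarith [mul_le_mul_of_nonneg_right c3 hDpos.le,
      mul_nonneg (by linarith : (0:ℚ) ≤ D - 2*K) (by linarith : (0:ℚ) ≤ D - vq)]
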